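/- The map Θ: ℝ⁴ × ℝ_d[x] → ℝ⁶ sending (x, f) to (X1 f(x), X2 f(x), X11 f(x), X21 f(x), X22 f(x), X12 f(x)) is a submersion for d ≥ 2, because its Jacobian with respect to the coefficients (α₁, α₂, β₁₁, β₁₂, β₂₂, α₃) of f is invertible at every point. -/

import Mathlib

noncomputable section

open Metric Set Function

/-- ℝ⁴ with the Euclidean metric. Coordinates: `x 0 = x₁`, `x 1 = x₂`, `x 2 = x₃`, `x 3 = x₄`. -/
abbrev E4 := EuclideanSpace ℝ (Fin 4)

/-- The vector field X1 = ∂/∂x1. -/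
def X1v (_ : E4) : E4 := (WithLp.equiv 2 (Fin 4 → ℝ)).symm ![1, 0, 0, 0]

/-- The vector field X2 = ∂/∂x2 + x1·∂/∂x3 + x3·∂/∂x4. -/
def X2v (x : E4) : E4 := (WithLp.equiv 2 (Fin 4 → ℝ)).symm ![0, 1, x 0, x 2]

/-- The vector field X3 = ∂/∂x3. -/
def X3v (_ : E4) : E4 := (WithLp.equiv 2 (Fin 4 → ℝ)).symm ![0, 0, 1, 0]

/-- The vector field X4 = ∂/∂x4. -/
def X4v (_ : E4) : E4 := (WithLp.equiv 2 (Fin 4 → ℝ)).symm ![0, 0, 0, 1]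

/-- X1 f : derivative of f along X1. -/
def X1 (f : E4 → ℝ) (x : E4) : ℝ := fderiv ℝ f x (X1v x)

/-- X2 f : derivative of f along X2. -/
def X2 (f : E4 → ℝ) (x : E4) : ℝ := fderiv ℝ f x (X2v x)

/-- X3 f : derivative of f along X3. -/
def X3 (f : E4 → ℝ) (x : E4) : ℝ := fderiv ℝ f x (X3v x)

/-- X4 f : derivative of f along X4. -/
def X4 (f : E4 → ℝ) (x : E4) : ℝ := fderiv ℝ f x (X4v x)

/-- The plane Δ_x = span{X1(x), X2(x)}. -/
def Delta (x : E4) : Submodule ℝ E4 := Submodule.span ℝ {X1v x, X2v x}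

/-- A polynomial of degree ≤ d (d ≥ 2) written as g + α₁x₁ + α₂x₂ + ½β₁₁x₁² + β₁₂x₁x₂
+ ½β₂₂x₂² + α₃x₃, where the six distinguished coefficients c = (α₁, α₂, β₁₁, β₁₂, β₂₂, α₃)
are the parameters and g collects all the remaining terms. -/
def pert (g : E4 → ℝ) (c : Fin 6 → ℝ) (x : E4) : ℝ :=
  g x + c 0 * x 0 + c 1 * x 1 + c 2 / 2 * (x 0) ^ 2 + c 3 * (x 0 * x 1)
    + c 4 / 2 * (x 1) ^ 2 + c 5 * x 2

/-- The map Θ(x, f) = (X1f(x), X2f(x), X11f(x), X21f(x), X22f(x), X12f(x)). -/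
def Theta (g : E4 → ℝ) (p : E4 × (Fin 6 → ℝ)) : Fin 6 → ℝ :=
  ![X1 (pert g p.2) p.1, X2 (pert g p.2) p.1,
    X1 (X1 (pert g p.2)) p.1, X2 (X1 (pert g p.2)) p.1,
    X2 (X2 (pert g p.2)) p.1, X1 (X2 (pert g p.2)) p.1]

/-- The Jacobian of Θ with respect to the coefficients (α₁, α₂, β₁₁, β₁₂, β₂₂, α₃). -/
def JacTheta (x : E4) : Matrix (Fin 6) (Fin 6) ℝ :=
  !![1, 0, x 0, x 1, 0,   0;
     0, 1, 0,   x 0, x 1, x 0;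
     0, 0, 1,   0,   0,   0;
     0, 0, 0,   1,   0,   0;
     0, 0, 0,   0,   1,   0;
     0, 0, 0,   1,   0,   1]

set_option maxRecDepth 8000

def prj (i : Fin 4) : E4 →L[ℝ] ℝ := EuclideanSpace.proj i

def q (c : Fin 6 → ℝ) (x : E4) : ℝ :=
  c 0 * x 0 + c 1 * x 1 + c 2 / 2 * (x 0) ^ 2 + c 3 * (x 0 * x 1)
    + c 4 / 2 * (x 1) ^ 2 + c 5 * x 2

def Dq (c : Fin 6 → ℝ) (x : E4) : E4 →L[ℝ] ℝ :=
  (c 0 + c 2 * x 0 + c 3 * x 1) • prj 0 + (c 1 + c 3 * x 0 + c 4 * x 1) • prj 1 + c 5 • prj 2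

lemma hprj (i : Fin 4) (x : E4) : HasFDerivAt (fun y : E4 => y i) (prj i) x :=
  (prj i).hasFDerivAt

lemma hasFDerivAt_q (c : Fin 6 → ℝ) (x : E4) : HasFDerivAt (q c) (Dq c x) x := by
  have h0 := hprj 0 x
  have h1 := hprj 1 x
  have h2 := hprj 2 x
  have H := (((((h0.const_mul (c 0)).add (h1.const_mul (c 1))).add
      ((h0.mul h0).const_mul (c 2 / 2))).add ((h0.mul h1).const_mul (c 3))).add
      ((h1.mul h1).const_mul (c 4 / 2))).add (h2.const_mul (c 5))
  have heq : q c = fun y : E4 => c 0 * y 0 + c 1 * y 1 + c 2 / 2 * (y 0 * y 0)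
      + c 3 * (y 0 * y 1) + c 4 / 2 * (y 1 * y 1) + c 5 * y 2 := by
    funext y; unfold q; ring
  rw [heq]
  exact H.congr_fderiv (by ext v; simp [Dq, prj]; ring)

lemma prj_X1v (i : Fin 4) (x : E4) : prj i (X1v x) = ![1,0,0,0] i := by
  simp [prj, X1v]
lemma prj_X2v (i : Fin 4) (x : E4) : prj i (X2v x) = ![0,1,x 0,x 2] i := by
  simp [prj, X2v]

lemma Dq_X1v (c : Fin 6 → ℝ) (x : E4) : Dq c x (X1v x) = c 0 + c 2 * x 0 + c 3 * x 1 := by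
  simp [Dq, prj_X1v]
lemma Dq_X2v (c : Fin 6 → ℝ) (x : E4) : Dq c x (X2v x) = c 1 + c 3 * x 0 + c 4 * x 1 + c 5 * x 0 := by
  simp [Dq, prj_X2v]

lemma pert_eq (g : E4 → ℝ) (c : Fin 6 → ℝ) : pert g c = fun y => g y + q c y := by
  funext y; unfold pert q; ring

variable {g : E4 → ℝ}

lemma X1_pert (hg : ContDiff ℝ ⊤ g) (c : Fin 6 → ℝ) :
    X1 (pert g c) = fun x => X1 g x + (c 0 + c 2 * x 0 + c 3 * x 1) := by
  funext x
  rw [pert_eq]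
  unfold X1
  rw [fderiv_fun_add (hg.differentiable (by simp) x) (hasFDerivAt_q c x).differentiableAt,
    (hasFDerivAt_q c x).fderiv]
  simp [Dq_X1v]

lemma X2_pert (hg : ContDiff ℝ ⊤ g) (c : Fin 6 → ℝ) :
    X2 (pert g c) = fun x => X2 g x + (c 1 + c 3 * x 0 + c 4 * x 1 + c 5 * x 0) := by
  funext x
  rw [pert_eq]
  unfold X2
  rw [fderiv_fun_add (hg.differentiable (by simp) x) (hasFDerivAt_q c x).differentiableAt,
    (hasFDerivAt_q c x).fderiv]
  simp [Dq_X2v]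

lemma contDiff_X2v : ContDiff ℝ ⊤ X2v := by
  have hrw : X2v = fun x : E4 => ((WithLp.equiv 2 (Fin 4 → ℝ)).symm ![0, 1, 0, 0]
      + x 0 • (WithLp.equiv 2 (Fin 4 → ℝ)).symm ![0, 0, 1, 0]
      + x 2 • (WithLp.equiv 2 (Fin 4 → ℝ)).symm ![(0:ℝ), 0, 0, 1]) := by
    funext x; ext j
    simp [X2v, PiLp.add_apply, PiLp.smul_apply]
    fin_cases j <;> simp
  rw [hrw]
  exact (contDiff_const.add (((prj 0).contDiff).smul contDiff_const)).add
    (((prj 2).contDiff).smul contDiff_const)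

lemma contDiff_X1g (hg : ContDiff ℝ ⊤ g) : ContDiff ℝ ⊤ (X1 g) :=
  (hg.fderiv_right le_top).clm_apply contDiff_const

lemma contDiff_X2g (hg : ContDiff ℝ ⊤ g) : ContDiff ℝ ⊤ (X2 g) :=
  (hg.fderiv_right le_top).clm_apply contDiff_X2v

def Dp1 (c : Fin 6 → ℝ) : E4 →L[ℝ] ℝ := c 2 • prj 0 + c 3 • prj 1
def Dp2 (c : Fin 6 → ℝ) : E4 →L[ℝ] ℝ := (c 3 + c 5) • prj 0 + c 4 • prj 1

lemma hasFDerivAt_p1 (c : Fin 6 → ℝ) (x : E4) :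
    HasFDerivAt (fun y : E4 => c 0 + c 2 * y 0 + c 3 * y 1) (Dp1 c) x := by
  have H := (((hasFDerivAt_const (c 0) x).add ((hprj 0 x).const_mul (c 2))).add
    ((hprj 1 x).const_mul (c 3)))
  exact H.congr_fderiv (by ext v; simp [Dp1])

lemma hasFDerivAt_p2 (c : Fin 6 → ℝ) (x : E4) :
    HasFDerivAt (fun y : E4 => c 1 + c 3 * y 0 + c 4 * y 1 + c 5 * y 0) (Dp2 c) x := by
  have H := ((((hasFDerivAt_const (c 1) x).add ((hprj 0 x).const_mul (c 3))).add
    ((hprj 1 x).const_mul (c 4))).add ((hprj 0 x).const_mul (c 5)))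
  exact H.congr_fderiv (by ext v; simp [Dp2]; ring)

lemma X1X1_pert (hg : ContDiff ℝ ⊤ g) (c : Fin 6 → ℝ) (x : E4) :
    X1 (X1 (pert g c)) x = X1 (X1 g) x + c 2 := by
  rw [X1_pert hg c]
  show fderiv ℝ _ x (X1v x) = _
  rw [fderiv_fun_add ((contDiff_X1g hg).differentiable (by simp) x)
    (hasFDerivAt_p1 c x).differentiableAt, (hasFDerivAt_p1 c x).fderiv]
  simp [X1, Dp1, prj_X1v]

lemma X2X1_pert (hg : ContDiff ℝ ⊤ g) (c : Fin 6 → ℝ) (x : E4) :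
    X2 (X1 (pert g c)) x = X2 (X1 g) x + c 3 := by
  rw [X1_pert hg c]
  show fderiv ℝ _ x (X2v x) = _
  rw [fderiv_fun_add ((contDiff_X1g hg).differentiable (by simp) x)
    (hasFDerivAt_p1 c x).differentiableAt, (hasFDerivAt_p1 c x).fderiv]
  simp [X2, Dp1, prj_X2v]

lemma X2X2_pert (hg : ContDiff ℝ ⊤ g) (c : Fin 6 → ℝ) (x : E4) :
    X2 (X2 (pert g c)) x = X2 (X2 g) x + c 4 := by
  rw [X2_pert hg c]
  show fderiv ℝ _ x (X2v x) = _
  rw [fderiv_fun_add ((contDiff_X2g hg).differentiable (by simp) x)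
    (hasFDerivAt_p2 c x).differentiableAt, (hasFDerivAt_p2 c x).fderiv]
  simp [X2, Dp2, prj_X2v]

lemma X1X2_pert (hg : ContDiff ℝ ⊤ g) (c : Fin 6 → ℝ) (x : E4) :
    X1 (X2 (pert g c)) x = X1 (X2 g) x + (c 3 + c 5) := by
  rw [X2_pert hg c]
  show fderiv ℝ _ x (X1v x) = _
  rw [fderiv_fun_add ((contDiff_X2g hg).differentiable (by simp) x)
    (hasFDerivAt_p2 c x).differentiableAt, (hasFDerivAt_p2 c x).fderiv]
  simp [X1, Dp2, prj_X1v]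

def Bv (g : E4 → ℝ) (x : E4) : Fin 6 → ℝ :=
  ![X1 g x, X2 g x, X1 (X1 g) x, X2 (X1 g) x, X2 (X2 g) x, X1 (X2 g) x]

lemma vec6_at {α : Type*} (a b c d e f : α) :
    (![a,b,c,d,e,f] : Fin 6 → α) 0 = a ∧ (![a,b,c,d,e,f] : Fin 6 → α) 1 = b ∧
    (![a,b,c,d,e,f] : Fin 6 → α) 2 = c ∧ (![a,b,c,d,e,f] : Fin 6 → α) 3 = d ∧
    (![a,b,c,d,e,f] : Fin 6 → α) 4 = e ∧ (![a,b,c,d,e,f] : Fin 6 → α) 5 = f :=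
  ⟨rfl, rfl, rfl, rfl, rfl, rfl⟩

lemma vec6_5 {α : Type*} (a b c d e f : α) : (![a,b,c,d,e,f] : Fin 6 → α) 5 = f := rfl
lemma vec6_4 {α : Type*} (a b c d e f : α) : (![a,b,c,d,e,f] : Fin 6 → α) 4 = e := rfl
lemma vec6_3 {α : Type*} (a b c d e f : α) : (![a,b,c,d,e,f] : Fin 6 → α) 3 = d := rfl
lemma vec6_2 {α : Type*} (a b c d e f : α) : (![a,b,c,d,e,f] : Fin 6 → α) 2 = c := rfl

lemma Theta_eq (hg : ContDiff ℝ ⊤ g) (p : E4 × (Fin 6 → ℝ)) :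
    Theta g p = Bv g p.1 + (JacTheta p.1).mulVec p.2 := by
  funext i
  have h1 := congrFun (X1_pert hg p.2) p.1
  have h2 := congrFun (X2_pert hg p.2) p.1
  fin_cases i <;>
    simp [Theta, Bv, JacTheta, Matrix.mulVec, dotProduct, Fin.sum_univ_six, Matrix.vecHead, Matrix.vecTail, vec6_2, vec6_3, vec6_4, vec6_5, h1, h2,
      X1X1_pert hg, X2X1_pert hg, X2X2_pert hg, X1X2_pert hg] <;> ring

lemma diff_Theta (hg : ContDiff ℝ ⊤ g) : Differentiable ℝ (Theta g) := by
  have hrw : Theta g = fun p : E4 × (Fin 6 → ℝ) => Bv g p.1 + (JacTheta p.1).mulVec p.2 :=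
    funext fun p => Theta_eq hg p
  rw [hrw]
  have d1 : Differentiable ℝ (X1 g) := (contDiff_X1g hg).differentiable (by simp)
  have d2 : Differentiable ℝ (X2 g) := (contDiff_X2g hg).differentiable (by simp)
  have d11 : Differentiable ℝ (X1 (X1 g)) :=
    (contDiff_X1g (contDiff_X1g hg)).differentiable (by simp)
  have d21 : Differentiable ℝ (X2 (X1 g)) :=
    (contDiff_X2g (contDiff_X1g hg)).differentiable (by simp)
  have d22 : Differentiable ℝ (X2 (X2 g)) :=
    (contDiff_X2g (contDiff_X2g hg)).differentiable (by simp)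
  have d12 : Differentiable ℝ (X1 (X2 g)) :=
    (contDiff_X1g (contDiff_X2g hg)).differentiable (by simp)
  have dc : ∀ i : Fin 4, Differentiable ℝ fun p : E4 × (Fin 6 → ℝ) => p.1 i :=
    fun i => (prj i).differentiable.comp differentiable_fst
  have dc2 : ∀ j : Fin 6, Differentiable ℝ fun p : E4 × (Fin 6 → ℝ) => p.2 j :=
    fun j => (ContinuousLinearMap.proj (R := ℝ) (φ := fun _ : Fin 6 => ℝ) j).differentiable.comp
      differentiable_snd
  rw [differentiable_pi]
  intro i
  fin_cases i <;>
    · simp [Bv, JacTheta, Matrix.mulVec, dotProduct,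
        Fin.sum_univ_six, Matrix.vecHead, Matrix.vecTail, vec6_2, vec6_3, vec6_4, vec6_5]
      fun_prop



/-- the Jacobian of Θ with respect to the coefficients
(α₁, α₂, β₁₁, β₁₂, β₂₂, α₃) is invertible at every point, and consequently
Θ is a submersion. -/
theorem stmt5 (g : E4 → ℝ) (hg : ContDiff ℝ ⊤ g) :
    (∀ x : E4, IsUnit (JacTheta x)) ∧
    (∀ p : E4 × (Fin 6 → ℝ), Function.Surjective (fderiv ℝ (Theta g) p)) := by
  have hunit : ∀ x : E4, IsUnit (JacTheta x) := by
    intro x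
    rw [Matrix.isUnit_iff_isUnit_det]
    have hdet : (JacTheta x).det = 1 := by
      simp [JacTheta, Matrix.det_succ_row_zero, Fin.sum_univ_succ]
    rw [hdet]; exact isUnit_one
  refine ⟨hunit, ?_⟩
  rintro ⟨x, c⟩ y
  set A := JacTheta x with hA
  set M : (Fin 6 → ℝ) →L[ℝ] (Fin 6 → ℝ) := LinearMap.toContinuousLinearMap A.mulVecLin with hM
  set ι : (Fin 6 → ℝ) →L[ℝ] E4 × (Fin 6 → ℝ) :=
    (0 : (Fin 6 → ℝ) →L[ℝ] E4).prod (ContinuousLinearMap.id ℝ _) with hι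
  have hcomp : HasFDerivAt (fun c' => Theta g (x, c'))
      ((fderiv ℝ (Theta g) (x, c)).comp ι) c :=
    ((diff_Theta hg (x, c)).hasFDerivAt).comp c
      ((hasFDerivAt_const x c).prodMk (hasFDerivAt_id c))
  have haff : HasFDerivAt (fun c' => Theta g (x, c')) M c := by
    have hfun : (fun c' => Theta g (x, c')) = fun c' => Bv g x + M c' := by
      funext c'
      rw [Theta_eq hg]
      simp [hM, hA, Matrix.mulVecLin_apply]
    rw [hfun]
    exact (M.hasFDerivAt).const_add (Bv g x)
  have hEq : (fderiv ℝ (Theta g) (x, c)).comp ι = M := hcomp.unique haff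
  have hAdet : IsUnit A.det := (Matrix.isUnit_iff_isUnit_det A).1 (hunit x)
  refine ⟨((0 : E4), (A⁻¹.mulVec y)), ?_⟩
  have h1 : ((0 : E4), (A⁻¹.mulVec y)) = ι ((A⁻¹.mulVec y)) := rfl
  rw [h1, ← ContinuousLinearMap.comp_apply, hEq]
  show A.mulVecLin ((A⁻¹.mulVec y)) = y
  rw [Matrix.mulVecLin_apply, Matrix.mulVec_mulVec, Matrix.mul_nonsing_inv _ hAdet,
    Matrix.one_mulVec]
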